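/- Let D be a division ring with char(D) ≠ 2, let A = M_m(D) be the ring of m×m matrices over D, and let f, g : A → A be additive functions such that x^{-n} f(x) + g(x^{-1}) = 0 for every invertible x ∈ A, where n is an odd integer. Then f(x) = 0 and g(x) = 0 for all x ∈ A. -/

import Mathlib

open Matrix

section Tri
variable {D : Type*} [DivisionRing D] {m : ℕ}

lemma strict_nilpotent (N : Matrix (Fin m) (Fin m) D)
    (hN : ∀ i j : Fin m, i ≤ j → N i j = 0) : N ^ m = 0 := by
  have key : ∀ k : ℕ, ∀ i j : Fin m, ¬ ((j:ℕ) + k ≤ (i:ℕ)) → (N ^ k) i j = 0 := by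
    intro k
    induction k with
    | zero =>
      intro i j h
      simp only [pow_zero, one_apply]
      rw [if_neg]
      intro e; subst e; omega
    | succ k ih =>
      intro i j h
      rw [pow_succ, mul_apply]
      apply Finset.sum_eq_zero
      intro l _
      by_cases hl : l ≤ j
      · rw [hN l j hl, mul_zero]
      · have hlt : (j:ℕ) < (l:ℕ) := by
          exact_mod_cast lt_of_not_ge hl
        rw [ih i l (by omega), zero_mul]
  ext i j
  rw [key m i j (by omega)]
  simp

lemma strict_nilpotent' (N : Matrix (Fin m) (Fin m) D)
    (hN : ∀ i j : Fin m, j ≤ i → N i j = 0) : N ^ m = 0 := by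
  have key : ∀ k : ℕ, ∀ i j : Fin m, ¬ ((i:ℕ) + k ≤ (j:ℕ)) → (N ^ k) i j = 0 := by
    intro k
    induction k with
    | zero =>
      intro i j h
      simp only [pow_zero, one_apply]
      rw [if_neg]
      intro e; subst e; omega
    | succ k ih =>
      intro i j h
      rw [pow_succ, mul_apply]
      apply Finset.sum_eq_zero
      intro l _
      by_cases hl : j ≤ l
      · rw [hN l j hl, mul_zero]
      · have hlt : (l:ℕ) < (j:ℕ) := by exact_mod_cast lt_of_not_ge hl
        rw [ih i l (by omega), zero_mul]
  ext i j
  rw [key m i j (by omega)]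
  simp

lemma diag_unit (d : Fin m → D) (hd : ∀ i, d i ≠ 0) :
    IsUnit (diagonal d) := by
  refine ⟨⟨diagonal d, diagonal (fun i => (d i)⁻¹), ?_, ?_⟩, rfl⟩
  · rw [diagonal_mul_diagonal]
    convert diagonal_one using 2
    ext i
    exact mul_inv_cancel₀ (hd i)
  · rw [diagonal_mul_diagonal]
    convert diagonal_one using 2
    ext i
    exact inv_mul_cancel₀ (hd i)

lemma tri_unit_aux (d : Fin m → D) (hd : ∀ i, d i ≠ 0)
    (S : Matrix (Fin m) (Fin m) D)
    (hnil : IsNilpotent (diagonal (fun i => (d i)⁻¹) * S)) :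
    IsUnit (diagonal d + S) := by
  have h1 : IsUnit (1 + diagonal (fun i => (d i)⁻¹) * S) := hnil.isUnit_one_add
  have key : diagonal d + S = diagonal d * (1 + diagonal (fun i => (d i)⁻¹) * S) := by
    rw [mul_add, mul_one, ← mul_assoc, diagonal_mul_diagonal]
    congr 1
    have h2 : ((fun i => d i * (d i)⁻¹) : Fin m → D) = fun _ => 1 := by
      ext i; exact mul_inv_cancel₀ (hd i)
    rw [h2, diagonal_one, one_mul]
  rw [key]
  exact (diag_unit d hd).mul h1

lemma lower_unit (d : Fin m → D) (hd : ∀ i, d i ≠ 0)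
    (S : Matrix (Fin m) (Fin m) D) (hS : ∀ i j : Fin m, i ≤ j → S i j = 0) :
    IsUnit (diagonal d + S) := by
  apply tri_unit_aux d hd
  refine ⟨m, strict_nilpotent _ ?_⟩
  intro i j hij
  rw [diagonal_mul, hS i j hij, mul_zero]

lemma upper_unit (d : Fin m → D) (hd : ∀ i, d i ≠ 0)
    (S : Matrix (Fin m) (Fin m) D) (hS : ∀ i j : Fin m, j ≤ i → S i j = 0) :
    IsUnit (diagonal d + S) := by
  apply tri_unit_aux d hd
  refine ⟨m, strict_nilpotent' _ ?_⟩
  intro i j hij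
  rw [diagonal_mul, hS i j hij, mul_zero]

lemma sum_two_units (hchar : ringChar D ≠ 2) (x : Matrix (Fin m) (Fin m) D) :
    ∃ u v : (Matrix (Fin m) (Fin m) D)ˣ, x = u.val + v.val := by
  classical
  have h2 : (2:D) ≠ 0 := Ring.two_ne_zero hchar
  set c : Fin m → D := fun i => if x i i = 1 then 2 else 1 with hc
  have hc0 : ∀ i, c i ≠ 0 := by
    intro i; simp only [hc]
    split_ifs <;> simp [h2]
  have hcx : ∀ i, x i i - c i ≠ 0 := by
    intro i; simp only [hc]
    split_ifs with h
    · rw [h]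
      intro hcontra
      have h1 : (2:D) = 1 := (sub_eq_zero.mp hcontra).symm
      have hh := congrArg (fun t => t - 1) h1
      norm_num at hh
    · intro hcontra
      exact h (sub_eq_zero.mp hcontra)
  set S : Matrix (Fin m) (Fin m) D := Matrix.of (fun i j => if (j:ℕ) < (i:ℕ) then x i j else 0) with hSdef
  set T : Matrix (Fin m) (Fin m) D := Matrix.of (fun i j => if (i:ℕ) < (j:ℕ) then x i j else 0) with hTdef
  have hL : IsUnit (diagonal c + S) := by
    apply lower_unit c hc0
    intro i j hij
    simp only [hSdef, of_apply]
    rw [if_neg]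
    omega
  have hU : IsUnit (diagonal (fun i => x i i - c i) + T) := by
    apply upper_unit (fun i => x i i - c i) hcx
    intro i j hij
    simp only [hTdef, of_apply]
    rw [if_neg]
    omega
  obtain ⟨u, hu⟩ := hL
  obtain ⟨v, hv⟩ := hU
  refine ⟨u, v, ?_⟩
  rw [hu, hv]
  ext i j
  simp only [Matrix.add_apply, diagonal_apply, hSdef, hTdef, of_apply]
  by_cases he : i = j
  · subst he
    rw [if_pos rfl, if_pos rfl]
    simp
  · have hne : (i:ℕ) ≠ (j:ℕ) := fun e => he (Fin.ext e)
    rw [if_neg he, if_neg he]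
    rcases lt_or_gt_of_ne hne with h | h
    · rw [if_neg (show ¬ (j:ℕ) < (i:ℕ) by omega), if_pos h]
      abel
    · rw [if_pos h, if_neg (show ¬ (i:ℕ) < (j:ℕ) by omega)]
      abel

lemma neg_zpow_odd {α : Type*} [Monoid α] [HasDistribNeg α] (a : αˣ) {k : ℤ}
    (hk : Odd k) : (-a) ^ k = -(a ^ k) := by
  obtain ⟨t, ht⟩ := hk
  have hc : Commute (-1 : αˣ) a := (Commute.one_left a).neg_left
  have h1 : (-a) = (-1) * a := by simp
  rw [h1, hc.mul_zpow]
  have h2 : ((-1 : αˣ)) ^ k = -1 := by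
    have hsq : ((-1 : αˣ)) ^ (2:ℤ) = 1 := by
      rw [show (2:ℤ) = ((2:ℕ):ℤ) by norm_num, zpow_natCast, neg_one_sq]
    rw [ht, show (2 * t + 1 : ℤ) = 2 * t + 1 by ring, _root_.zpow_add, _root_.zpow_mul, hsq,
      _root_.one_zpow, one_mul, _root_.zpow_one]
  rw [h2, neg_one_mul]

end Tri

theorem stmt_0 (D : Type*) [DivisionRing D] (hchar : ringChar D ≠ 2)
    (m : ℕ) (hm : 0 < m) (n : ℤ) (hn : Odd n)
    (f g : Matrix (Fin m) (Fin m) D → Matrix (Fin m) (Fin m) D)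
    (hf : ∀ x y, f (x + y) = f x + f y)
    (hg : ∀ x y, g (x + y) = g x + g y)
    (hfg : ∀ u : (Matrix (Fin m) (Fin m) D)ˣ,
      (u ^ (-n)).val * f u.val + g (u⁻¹).val = 0) :
    ∀ x, f x = 0 ∧ g x = 0 := by
  let F := AddMonoidHom.mk' f hf
  let G := AddMonoidHom.mk' g hg
  have hFf : ∀ x, F x = f x := fun _ => rfl
  have hGg : ∀ x, G x = g x := fun _ => rfl
  have h2 : (2:D) ≠ 0 := Ring.two_ne_zero hchar
  have hginv : ∀ u : (Matrix (Fin m) (Fin m) D)ˣ, g (u⁻¹).val = 0 := by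
    intro u
    have h1 := hfg u
    have h2' := hfg (-u)
    rw [neg_zpow_odd u hn.neg] at h2'
    have e1 : ((-(u ^ (-n))).val) = -((u ^ (-n)).val) := Units.val_neg _
    have einv : (-u)⁻¹ = -(u⁻¹) := by
      rw [← _root_.zpow_neg_one, neg_zpow_odd u ⟨-1, by ring⟩, _root_.zpow_neg_one]
    have e2 : ((-u).val) = -(u.val) := Units.val_neg _
    have e3 : (((-u)⁻¹).val) = -((u⁻¹).val) := by rw [einv, Units.val_neg]
    rw [e1, e2, e3] at h2'
    have e4 : f (-u.val) = - f u.val := by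
      rw [← hFf, ← hFf, map_neg]
    have e5 : g (-(u⁻¹).val) = - g (u⁻¹).val := by
      rw [← hGg, ← hGg, map_neg]
    rw [e4, e5, neg_mul_neg] at h2'
    have hQ : g (u⁻¹).val + g (u⁻¹).val = 0 := by
      have hsub := sub_eq_zero.mpr (h1.trans h2'.symm)
      rw [show ((u ^ (-n)).val * f u.val + g (u⁻¹).val) -
            ((u ^ (-n)).val * f u.val + -g (u⁻¹).val)
          = g (u⁻¹).val + g (u⁻¹).val by abel] at hsub
      exact hsub
    ext i j
    have hij := congrFun (congrFun hQ i) j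
    simp only [Matrix.add_apply, Matrix.zero_apply] at hij ⊢
    have h2m : (2:D) * (g (u⁻¹).val i j) = 0 := by rw [two_mul]; exact hij
    rcases mul_eq_zero.mp h2m with h | h
    · exact absurd h h2
    · exact h
  have hgu : ∀ u : (Matrix (Fin m) (Fin m) D)ˣ, g u.val = 0 := by
    intro u
    have := hginv u⁻¹
    rwa [inv_inv] at this
  have hfu : ∀ u : (Matrix (Fin m) (Fin m) D)ˣ, f u.val = 0 := by
    intro u
    have h1 := hfg u
    rw [hginv u, add_zero] at h1
    have hmul := congrArg (fun y => ((u ^ n).val) * y) h1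
    simp only [mul_zero] at hmul
    rw [← mul_assoc, ← Units.val_mul, ← _root_.zpow_add, add_neg_cancel, zpow_zero,
      Units.val_one, one_mul] at hmul
    exact hmul
  intro x
  obtain ⟨u, v, huv⟩ := sum_two_units hchar x
  constructor
  · rw [huv, hf, hfu, hfu, add_zero]
  · rw [huv, hg, hgu, hgu, add_zero]
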